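/- arXiv:1104.0293 — 2 statements merged into one kernel-verified Lean document; each statement's English description precedes it below -/
import Mathlib

section
/- Let H be a reduced, commutative, cancellative, atomic monoid satisfying the ascending chain condition on principal ideals. Then c(H) = sup{μ(a) : a ∈ H, A_a(∼_H) ≠ ∅, |R_a| > 1}. -/
namespace CMR

variable {α : Type*} [CancelCommMonoid α]

/-- The factorization monoid `Z(H)`: the free abelian monoid over the set of atoms of `H`,
modeled as multisets of atoms. -/
abbrev Fac (α : Type*) [CancelCommMonoid α] : Type _ := Multiset {u : α // Irreducible u}

/-- The factorization homomorphism `π : Z(H) → H`. -/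
def piF (z : Fac α) : α := (z.map Subtype.val).prod

/-- `Z a`: the set of factorizations of `a`. -/
def Z (a : α) : Set (Fac α) := {z | piF z = a}

/-- `L a`: the set of lengths of `a`. -/
def L (a : α) : Set ℕ := {n | ∃ z ∈ Z a, Multiset.card z = n}

/-- `Zk a k`: the factorizations of `a` of length `k`. -/
def Zk (a : α) (k : ℕ) : Set (Fac α) := {z ∈ Z a | Multiset.card z = k}

/-- `ZM a M`: the factorizations of `a` whose length lies in `M`. -/
def ZM (a : α) (M : Set ℕ) : Set (Fac α) := {z ∈ Z a | Multiset.card z ∈ M}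

/-- The distance between two factorizations:
`d(z,z') = max (|z / gcd(z,z')|, |z' / gcd(z,z')|)`. -/
noncomputable def d (z z' : Fac α) : ℕ :=
  letI := Classical.decEq {u : α // Irreducible u}
  max (Multiset.card (z - z')) (Multiset.card (z' - z))

/-- The distance between two sets of factorizations, the minimum of pairwise
distances (with the convention `sInf ∅ = 0`). -/
noncomputable def dS (X Y : Set (Fac α)) : ℕ :=
  sInf {n : ℕ | ∃ x ∈ X, ∃ y ∈ Y, d x y = n}

/-- `k` and `l` are adjacent lengths of `a` (with `k < l`):
`L(a) ∩ [k, l] = {k, l}`. -/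
def Adjacent (a : α) (k l : ℕ) : Prop :=
  k ∈ L a ∧ l ∈ L a ∧ k < l ∧ ∀ m ∈ L a, k ≤ m → m ≤ l → m = k ∨ m = l

/-- A chain of factorizations of `a` from `z` to `z'` whose consecutive members
satisfy the step predicate `P`. -/
def Chain (a : α) (P : Fac α → Fac α → Prop) (z z' : Fac α) : Prop :=
  ∃ (n : ℕ) (c : Fin (n + 1) → Fac α),
    c 0 = z ∧ c (Fin.last n) = z' ∧ (∀ i, c i ∈ Z a) ∧
    ∀ i : Fin n, P (c i.castSucc) (c i.succ)

/-- The catenary degree of an element: the smallest `N ∈ ℕ∞` such that any two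
factorizations of `a` are connected by an `N`-chain. -/
noncomputable def cat (a : α) : ℕ∞ :=
  sInf {N : ℕ∞ | ∀ z ∈ Z a, ∀ z' ∈ Z a,
    Chain a (fun x y => (d x y : ℕ∞) ≤ N) z z'}

/-- The equal catenary degree of an element: the smallest `N ∈ ℕ∞` such that any two
factorizations of `a` of the same length are connected by an equal-length `N`-chain. -/
noncomputable def ceq (a : α) : ℕ∞ :=
  sInf {N : ℕ∞ | ∀ z ∈ Z a, ∀ z' ∈ Z a, Multiset.card z = Multiset.card z' →
    Chain a (fun x y => (d x y : ℕ∞) ≤ N ∧ Multiset.card x = Multiset.card y) z z'}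

/-- The monotone catenary degree of an element: the smallest `N ∈ ℕ∞` such that any two
factorizations of `a` (ordered by length) are connected by a monotone `N`-chain. -/
noncomputable def cmon (a : α) : ℕ∞ :=
  sInf {N : ℕ∞ | ∀ z ∈ Z a, ∀ z' ∈ Z a, Multiset.card z ≤ Multiset.card z' →
    Chain a (fun x y => (d x y : ℕ∞) ≤ N ∧ Multiset.card x ≤ Multiset.card y) z z'}

/-- The adjacent catenary degree of an element:
`c_adj(a) = sup{d(Z_k(a), Z_l(a)) : k, l ∈ L(a) adjacent}`. -/
noncomputable def cadj (a : α) : ℕ∞ :=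
  sSup {r : ℕ∞ | ∃ k l : ℕ, Adjacent a k l ∧ r = (dS (Zk a k) (Zk a l) : ℕ∞)}

noncomputable def catH (α : Type*) [CancelCommMonoid α] : ℕ∞ := ⨆ a : α, cat a
noncomputable def ceqH (α : Type*) [CancelCommMonoid α] : ℕ∞ := ⨆ a : α, ceq a
noncomputable def cmonH (α : Type*) [CancelCommMonoid α] : ℕ∞ := ⨆ a : α, cmon a
noncomputable def cadjH (α : Type*) [CancelCommMonoid α] : ℕ∞ := ⨆ a : α, cadj a

/-- `gcd(x, y) ≠ 1`: the two factorizations share an atom. -/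
def RStep (x y : Fac α) : Prop := ∃ u, u ∈ x ∧ u ∈ y

/-- `z ≈ z'`: there is an `R`-chain concatenating `z` and `z'` in `Z a`. -/
def RRel (a : α) (z z' : Fac α) : Prop := Chain a RStep z z'

/-- `z ≈_eq z'`: there is an equal-length `R`-chain concatenating `z` and `z'` in `Z a`. -/
def RRelEq (a : α) (z z' : Fac α) : Prop :=
  Chain a (fun x y => RStep x y ∧ Multiset.card x = Multiset.card y) z z'

/-- There is a monotone `R`-chain from `z` to `z'` in `Z a`. -/
def MonRChain (a : α) (z z' : Fac α) : Prop :=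
  Chain a (fun x y => RStep x y ∧ Multiset.card x ≤ Multiset.card y) z z'

/-- `μ(a)`: the supremum, over the `R`-classes `ρ` of `Z a`, of the minimal length of
an element of `ρ`. -/
noncomputable def mu (a : α) : ℕ∞ :=
  sSup {r : ℕ∞ | ∃ z ∈ Z a,
    r = ((sInf {n : ℕ | ∃ z', RRel a z z' ∧ Multiset.card z' = n} : ℕ) : ℕ∞)}

noncomputable def muH (α : Type*) [CancelCommMonoid α] : ℕ∞ := ⨆ a : α, mu a

/-- `μ_eq(a) = sup{k ∈ L(a) : Z_k(a) has more than one ≈_eq-class}`. -/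
noncomputable def mueq (a : α) : ℕ∞ :=
  sSup {r : ℕ∞ | ∃ k ∈ L a,
    (∃ z ∈ Zk a k, ∃ z' ∈ Zk a k, ¬ RRelEq a z z') ∧ r = (k : ℕ∞)}

noncomputable def mueqH (α : Type*) [CancelCommMonoid α] : ℕ∞ := ⨆ a : α, mueq a

/-- `μ_adj(a) = sup{k ∈ L(a) : d(Z_k(a), Z_l(a)) = k for the l ∈ L(a), l < k adjacent to k}`. -/
noncomputable def muadj (a : α) : ℕ∞ :=
  sSup {r : ℕ∞ | ∃ k ∈ L a,
    (∃ l : ℕ, Adjacent a l k ∧ dS (Zk a k) (Zk a l) = k) ∧ r = (k : ℕ∞)}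

noncomputable def muadjH (α : Type*) [CancelCommMonoid α] : ℕ∞ := ⨆ a : α, muadj a

/-- The monoid of relations of `H`, as a subset of `Z(H) × Z(H)`. -/
def relMon (α : Type*) [CancelCommMonoid α] : Set (Fac α × Fac α) :=
  {p | piF p.1 = piF p.2}

/-- The monoid of equal-length relations of `H`. -/
def relMonEq (α : Type*) [CancelCommMonoid α] : Set (Fac α × Fac α) :=
  {p | piF p.1 = piF p.2 ∧ Multiset.card p.1 = Multiset.card p.2}

/-- The monoid of monotone relations of `H`. -/
def relMonMon (α : Type*) [CancelCommMonoid α] : Set (Fac α × Fac α) :=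
  {p | piF p.1 = piF p.2 ∧ Multiset.card p.1 ≤ Multiset.card p.2}

/-- `p` is an atom (irreducible element) of the reduced submonoid `S` of `Z(H) × Z(H)`. -/
def IsAtomIn (S : Set (Fac α × Fac α)) (p : Fac α × Fac α) : Prop :=
  p ∈ S ∧ p ≠ 0 ∧ ∀ q ∈ S, ∀ r ∈ S, p = q + r → q = 0 ∨ r = 0

/-- `A_a(S) = A(S) ∩ (Z(a) × Z(a))`. -/
def AtomsAt (S : Set (Fac α × Fac α)) (a : α) : Set (Fac α × Fac α) :=
  {p | IsAtomIn S p ∧ p.1 ∈ Z a ∧ p.2 ∈ Z a}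

/-- The tame degree `t(a, x)`. -/
noncomputable def tdeg (a : α) (x : Fac α) : ℕ∞ :=
  sInf {N : ℕ∞ | ∀ z ∈ Z a, (∃ w ∈ Z a, x ≤ w) →
    ∃ z' ∈ Z a, x ≤ z' ∧ (d z z' : ℕ∞) ≤ N}

/-- The tame degree `t(H) = sup{t(a, u) : a ∈ H, u ∈ A(H)}`. -/
noncomputable def tH (α : Type*) [CancelCommMonoid α] : ℕ∞ :=
  ⨆ (a : α) (u : {u : α // Irreducible u}), tdeg a {u}

/-- The `m`-adjacent catenary degree of an element:
`c_{ad,m}(a) = sup{d(Z_k(a), Z_{[k-m,k)}(a)) : k ∈ L(a)}`. -/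
noncomputable def cadm (m : ℕ) (a : α) : ℕ∞ :=
  sSup {r : ℕ∞ | ∃ k ∈ L a, r = (dS (Zk a k) (ZM a (Set.Ico (k - m) k)) : ℕ∞)}

noncomputable def cadmH (α : Type*) [CancelCommMonoid α] (m : ℕ) : ℕ∞ := ⨆ a : α, cadm m a

/-- `μ_{ad,m}(a) = sup{k ∈ L(a) : d(Z_k(a), Z_{[k-m,k)}(a)) = k}`. -/
noncomputable def muadm (m : ℕ) (a : α) : ℕ∞ :=
  sSup {r : ℕ∞ | ∃ k ∈ L a, dS (Zk a k) (ZM a (Set.Ico (k - m) k)) = k ∧ r = (k : ℕ∞)}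

noncomputable def muadmH (α : Type*) [CancelCommMonoid α] (m : ℕ) : ℕ∞ := ⨆ a : α, muadm m a

/-- `H` is reduced: the only unit is `1`. -/
def Reduced (α : Type*) [CancelCommMonoid α] : Prop := ∀ a : α, IsUnit a → a = 1

/-- `H` is atomic: every element is a product of atoms. -/
def Atomic (α : Type*) [CancelCommMonoid α] : Prop := ∀ a : α, ∃ z : Fac α, piF z = a

/-- The ascending chain condition on principal ideals. -/
def ACCP (α : Type*) [CancelCommMonoid α] : Prop :=
  ∀ f : ℕ → α, (∀ n, f (n + 1) ∣ f n) → ∃ N, ∀ n, N ≤ n → f N ∣ f n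

section Proof1

open Relation

variable {α : Type*} [CancelCommMonoid α]

theorem piF_zero : piF (0 : Fac α) = 1 := by simp [piF]

theorem piF_cons (u : {u : α // Irreducible u}) (x : Fac α) :
    piF (u ::ₘ x) = u.val * piF x := by simp [piF]

theorem piF_add (x y : Fac α) : piF (x + y) = piF x * piF y := by simp [piF]

theorem eq_zero_of_piF_eq_one {x : Fac α} (h : piF x = 1) : x = 0 := by
  classical
  by_contra hx
  obtain ⟨u, hu⟩ := Multiset.exists_mem_of_ne_zero hx
  have hdvd : u.val ∣ piF x := by
    refine ⟨piF (x.erase u), ?_⟩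
    rw [← piF_cons, Multiset.cons_erase hu]
  rw [h] at hdvd
  exact u.2.not_isUnit (isUnit_of_dvd_one hdvd)

theorem cons_sub_cons' {β : Type*} [DecidableEq β] (u : β) (s t : Multiset β) :
    (u ::ₘ s) - (u ::ₘ t) = s - t := by
  ext v
  simp only [Multiset.count_sub, Multiset.count_cons]
  split_ifs <;> omega

theorem sub_eq_self_of_disj {β : Type*} [DecidableEq β] {s t : Multiset β}
    (h : ∀ v ∈ s, v ∉ t) : s - t = s := by
  ext v
  rw [Multiset.count_sub]
  by_cases hv : v ∈ s
  · rw [Multiset.count_eq_zero.2 (h v hv), Nat.sub_zero]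
  · simp [Multiset.count_eq_zero.2 hv]

theorem d_eq [DecidableEq {u : α // Irreducible u}] (x y : Fac α) :
    d x y = max (Multiset.card (x - y)) (Multiset.card (y - x)) := by
  unfold d
  congr <;> exact Subsingleton.elim _ _

theorem d_cons (u : {u : α // Irreducible u}) (x y : Fac α) :
    d (u ::ₘ x) (u ::ₘ y) = d x y := by
  classical
  rw [d_eq, d_eq, cons_sub_cons', cons_sub_cons']

theorem d_le_max (x y : Fac α) :
    d x y ≤ max (Multiset.card x) (Multiset.card y) := by
  classical
  rw [d_eq]
  exact max_le_max (Multiset.card_le_card (Multiset.sub_le_self _ _))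
    (Multiset.card_le_card (Multiset.sub_le_self _ _))

theorem card_le_d_of_not_rstep {x y : Fac α} (h : ¬ RStep x y) :
    Multiset.card x ≤ d x y := by
  classical
  rw [d_eq]
  have hxy : x - y = x := sub_eq_self_of_disj (fun v hv hvy => h ⟨v, hv, hvy⟩)
  rw [hxy]
  exact le_max_left _ _

/-- The membership-decorated step relation. -/
def Step (a : α) (P : Fac α → Fac α → Prop) (x y : Fac α) : Prop :=
  x ∈ Z a ∧ y ∈ Z a ∧ P x y

theorem chain_refl {a : α} {P : Fac α → Fac α → Prop} {z : Fac α} (h : z ∈ Z a) :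
    Chain a P z z :=
  ⟨0, fun _ => z, rfl, rfl, fun _ => h, fun i => i.elim0⟩

theorem chain_head {a : α} {P : Fac α → Fac α → Prop} {z y z' : Fac α}
    (hs : Step a P z y) (hc : Chain a P y z') : Chain a P z z' := by
  obtain ⟨n, c, h0, hl, hmem, hstep⟩ := hc
  refine ⟨n + 1, Fin.cons z c, Fin.cons_zero _ _, ?_, ?_, ?_⟩
  · rw [← Fin.succ_last, Fin.cons_succ, hl]
  · intro i
    induction i using Fin.cases with
    | zero => rw [Fin.cons_zero]; exact hs.1
    | succ j => rw [Fin.cons_succ]; exact hmem j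
  · intro i
    induction i using Fin.cases with
    | zero =>
      rw [Fin.castSucc_zero, Fin.cons_zero, Fin.cons_succ, h0]
      exact hs.2.2
    | succ j =>
      have e1 : Fin.castSucc (Fin.succ j) = Fin.succ (Fin.castSucc j) := by
        ext
        simp
      rw [e1, Fin.cons_succ, Fin.cons_succ]
      exact hstep j

theorem chain_iff {a : α} {P : Fac α → Fac α → Prop} {z z' : Fac α} :
    Chain a P z z' ↔ z ∈ Z a ∧ z' ∈ Z a ∧ ReflTransGen (Step a P) z z' := by
  constructor
  · rintro ⟨n, c, h0, hl, hmem, hstep⟩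
    subst h0; subst hl
    refine ⟨hmem 0, hmem _, ?_⟩
    have key : ∀ i : Fin (n + 1), ReflTransGen (Step a P) (c 0) (c i) := by
      intro i
      induction i using Fin.induction with
      | zero => exact .refl
      | succ j ih => exact ih.tail ⟨hmem _, hmem _, hstep j⟩
    exact key _
  · rintro ⟨hz, hz', hr⟩
    revert hz
    induction hr using Relation.ReflTransGen.head_induction_on with
    | refl => exact fun _ => chain_refl hz'
    | head hstep _ ih => exact fun _ => chain_head hstep (ih hstep.2.1)

theorem chain_single {a : α} {P : Fac α → Fac α → Prop} {z y : Fac α}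
    (hs : Step a P z y) : Chain a P z y :=
  chain_head hs (chain_refl hs.2.1)

theorem chain_trans {a : α} {P : Fac α → Fac α → Prop} {z y z' : Fac α}
    (h1 : Chain a P z y) (h2 : Chain a P y z') : Chain a P z z' := by
  rw [chain_iff] at h1 h2 ⊢
  exact ⟨h1.1, h2.2.1, h1.2.2.trans h2.2.2⟩

theorem rrel_iff {a : α} {z z' : Fac α} :
    RRel a z z' ↔ z ∈ Z a ∧ z' ∈ Z a ∧ ReflTransGen (Step a RStep) z z' :=
  chain_iff

theorem rrel_refl {a : α} {z : Fac α} (h : z ∈ Z a) : RRel a z z := chain_refl h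

theorem rrel_symm {a : α} {z z' : Fac α} (h : RRel a z z') : RRel a z' z := by
  rw [rrel_iff] at h ⊢
  refine ⟨h.2.1, h.1, ?_⟩
  have hsym : Symmetric (Step a RStep) := by
    rintro x y ⟨hx, hy, u, h1, h2⟩
    exact ⟨hy, hx, u, h2, h1⟩
  exact (@Relation.ReflTransGen.stdSymm _ _ ⟨hsym⟩).symm _ _ h.2.2

theorem rrel_trans {a : α} {z y z' : Fac α} (h1 : RRel a z y) (h2 : RRel a y z') :
    RRel a z z' := chain_trans h1 h2

theorem exists_min_rep {a : α} {z : Fac α} (hz : z ∈ Z a) :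
    ∃ w, RRel a z w ∧ ((Multiset.card w : ℕ) : ℕ∞) ≤ mu a ∧
      ∀ y, RRel a z y → Multiset.card w ≤ Multiset.card y := by
  have hne : {n : ℕ | ∃ z', RRel a z z' ∧ Multiset.card z' = n}.Nonempty :=
    ⟨Multiset.card z, z, rrel_refl hz, rfl⟩
  obtain ⟨w, hw1, hw2⟩ := Nat.sInf_mem hne
  refine ⟨w, hw1, ?_, ?_⟩
  · rw [hw2, mu]
    exact le_sSup ⟨z, hz, rfl⟩
  · intro y hy
    rw [hw2]
    exact Nat.sInf_le ⟨y, hy, rfl⟩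

theorem isAtom_of_not_rrel {a : α} {z z' : Fac α} (hz : z ∈ Z a) (hz' : z' ∈ Z a)
    (h : ¬ RRel a z z') : IsAtomIn (relMon α) (z, z') := by
  refine ⟨show piF z = piF z' from hz.trans hz'.symm, ?_, ?_⟩
  · intro h0
    rw [Prod.mk_eq_zero] at h0
    obtain ⟨e1, e2⟩ := h0
    subst e1
    subst e2
    exact h (rrel_refl hz)
  · rintro ⟨q1, q2⟩ hq ⟨r1, r2⟩ hr hqr
    by_contra hc
    push_neg at hc
    obtain ⟨hq0, hr0⟩ := hc
    rw [Prod.mk_add_mk, Prod.mk.injEq] at hqr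
    obtain ⟨hz1, hz2⟩ := hqr
    replace hq : piF q1 = piF q2 := hq
    replace hr : piF r1 = piF r2 := hr
    have key : ∀ s t : Fac α, piF s = piF t → (s, t) ≠ 0 → s ≠ 0 ∧ t ≠ 0 := by
      intro s t hst hst0
      constructor
      · rintro rfl
        have ht : t = 0 := eq_zero_of_piF_eq_one (by rw [← hst, piF_zero])
        exact hst0 (by rw [ht]; rfl)
      · rintro rfl
        have hs : s = 0 := eq_zero_of_piF_eq_one (by rw [hst, piF_zero])
        exact hst0 (by rw [hs]; rfl)
    obtain ⟨hq1, hq2⟩ := key q1 q2 hq hq0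
    obtain ⟨hr1, hr2⟩ := key r1 r2 hr hr0
    have hmid : (q2 + r1) ∈ Z a := by
      show piF (q2 + r1) = a
      rw [piF_add, ← hq, ← piF_add, ← hz1]
      exact hz
    obtain ⟨u, hu⟩ := Multiset.exists_mem_of_ne_zero hr1
    obtain ⟨v, hv⟩ := Multiset.exists_mem_of_ne_zero hq2
    have s1 : Step a RStep z (q2 + r1) :=
      ⟨hz, hmid, u, by rw [hz1]; exact Multiset.mem_add.2 (Or.inr hu),
        Multiset.mem_add.2 (Or.inr hu)⟩
    have s2 : Step a RStep (q2 + r1) z' :=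
      ⟨hmid, hz', v, Multiset.mem_add.2 (Or.inl hv),
        by rw [hz2]; exact Multiset.mem_add.2 (Or.inl hv)⟩
    exact h (rrel_trans (chain_single s1) (chain_single s2))

theorem crossing {a : α} {N : ℕ∞} {z z' : Fac α} (hz : z ∈ Z a) (h : ¬ RRel a z z')
    (hc : Chain a (fun x y => (d x y : ℕ∞) ≤ N) z z') :
    ∃ x, RRel a z x ∧ ((Multiset.card x : ℕ) : ℕ∞) ≤ N := by
  rw [chain_iff] at hc
  obtain ⟨-, -, hrtg⟩ := hc
  have key : ∀ w, ReflTransGen (Step a fun x y => (d x y : ℕ∞) ≤ N) z w →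
      RRel a z w ∨ ∃ x, RRel a z x ∧ ((Multiset.card x : ℕ) : ℕ∞) ≤ N := by
    intro w hw
    induction hw with
    | refl => exact Or.inl (rrel_refl hz)
    | @tail b c hab hbc ih =>
      rcases ih with ih | ih
      · by_cases hrc : RRel a z c
        · exact Or.inl hrc
        · obtain ⟨hb, hcz, hd⟩ := hbc
          refine Or.inr ⟨b, ih, ?_⟩
          have hnstep : ¬ RStep b c := fun hs =>
            hrc (rrel_trans ih (chain_single ⟨hb, hcz, hs⟩))
          have h1 : ((Multiset.card b : ℕ) : ℕ∞) ≤ ((d b c : ℕ) : ℕ∞) := by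
            exact_mod_cast card_le_d_of_not_rstep hnstep
          exact h1.trans hd
      · exact Or.inr ih
  rcases key z' hrtg with h1 | h2
  · exact absurd h1 h
  · exact h2

/-- Strict divisibility. -/
def SDvd (b a : α) : Prop := b ∣ a ∧ ¬ a ∣ b

theorem sdvd_wf (haccp : ACCP α) : WellFounded (SDvd (α := α)) := by
  by_contra hwf
  have hex : ∃ a : α, ¬ Acc SDvd a := by
    by_contra h2
    simp only [not_exists, not_not] at h2
    exact hwf ⟨h2⟩
  obtain ⟨a0, ha0⟩ := hex
  have key : ∀ x : α, ¬ Acc SDvd x → ∃ y, SDvd y x ∧ ¬ Acc SDvd y := by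
    intro x hx
    by_contra h3
    push_neg at h3
    exact hx (Acc.intro x h3)
  choose g hg1 hg2 using key
  let f : ℕ → {x : α // ¬ Acc SDvd x} :=
    fun n => Nat.rec ⟨a0, ha0⟩ (fun _ p => ⟨g p.1 p.2, hg2 p.1 p.2⟩) n
  have hdvd : ∀ n, (f (n + 1)).1 ∣ (f n).1 := fun n => (hg1 (f n).1 (f n).2).1
  obtain ⟨N, hN⟩ := haccp (fun n => (f n).1) hdvd
  exact (hg1 (f N).1 (f N).2).2 (hN (N + 1) (Nat.le_succ N))

theorem main_chain (haccp : ACCP α) (D : ℕ∞)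
    (hD : ∀ b : α, ∀ z z' : Fac α, z ∈ Z b → z' ∈ Z b → ¬ RRel b z z' → mu b ≤ D) :
    ∀ a : α, ∀ z ∈ Z a, ∀ z' ∈ Z a, Chain a (fun x y => (d x y : ℕ∞) ≤ D) z z' := by
  classical
  intro a
  refine WellFounded.induction (sdvd_wf haccp)
    (C := fun a => ∀ z ∈ Z a, ∀ z' ∈ Z a, Chain a (fun x y => ((d x y : ℕ) : ℕ∞) ≤ D) z z') a ?_
  clear a
  intro a IH
  have L : ∀ z z' : Fac α, RRel a z z' → Chain a (fun x y => (d x y : ℕ∞) ≤ D) z z' := by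
    intro z z' hr
    rw [rrel_iff] at hr
    obtain ⟨hz, hz', hrtg⟩ := hr
    clear hz'
    induction hrtg with
    | refl => exact chain_refl hz
    | @tail b c hab hbc ih =>
      obtain ⟨hb, hcz, u, hub, huc⟩ := hbc
      have hbe : u ::ₘ b.erase u = b := Multiset.cons_erase hub
      have hce : u ::ₘ c.erase u = c := Multiset.cons_erase huc
      have hpb : u.val * piF (b.erase u) = a := by rw [← piF_cons, hbe]; exact hb
      have hpc : u.val * piF (c.erase u) = a := by rw [← piF_cons, hce]; exact hcz
      have hxy : piF (b.erase u) = piF (c.erase u) :=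
        mul_left_cancel (hpb.trans hpc.symm)
      have hsd : SDvd (piF (b.erase u)) a := by
        constructor
        · exact ⟨u.val, ((mul_comm _ _).trans hpb).symm⟩
        · rintro ⟨t, ht⟩
          have e : piF (b.erase u) * 1 = piF (b.erase u) * (t * u.val) := by
            rw [mul_one]
            conv_lhs => rw [ht, ← hpb]
            rw [mul_comm u.val (piF (b.erase u)), mul_assoc, mul_comm u.val t]
          have h1 : (1 : α) = t * u.val := mul_left_cancel e
          exact u.2.not_isUnit (IsUnit.of_mul_eq_one (a := u.val) t
            (by rw [mul_comm]; exact h1.symm))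
      have hchain := IH (piF (b.erase u)) hsd (b.erase u) rfl (c.erase u) hxy.symm
      have hmap : Chain a (fun x y => (d x y : ℕ∞) ≤ D) b c := by
        rw [chain_iff] at hchain ⊢
        refine ⟨hb, hcz, ?_⟩
        have hstepmap : ∀ s t : Fac α,
            Step (piF (b.erase u)) (fun x y => ((d x y : ℕ) : ℕ∞) ≤ D) s t →
            Step a (fun x y => ((d x y : ℕ) : ℕ∞) ≤ D) (u ::ₘ s) (u ::ₘ t) := by
          rintro s t ⟨hs, ht, hdst⟩
          refine ⟨?_, ?_, ?_⟩
          · show piF (u ::ₘ s) = a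
            rw [piF_cons, show piF s = piF (b.erase u) from hs]
            exact hpb
          · show piF (u ::ₘ t) = a
            rw [piF_cons, show piF t = piF (b.erase u) from ht]
            exact hpb
          · show ((d (u ::ₘ s) (u ::ₘ t) : ℕ) : ℕ∞) ≤ D
            rw [d_cons]
            exact hdst
        have hlift : ReflTransGen (Step a fun x y => ((d x y : ℕ) : ℕ∞) ≤ D)
            (u ::ₘ b.erase u) (u ::ₘ c.erase u) :=
          Relation.ReflTransGen.lift (fun s => u ::ₘ s) hstepmap _ _ hchain.2.2
        rw [hbe, hce] at hlift
        exact hlift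
      exact chain_trans ih hmap
  intro z hz z' hz'
  by_cases hr : RRel a z z'
  · exact L z z' hr
  · have hmu : mu a ≤ D := hD a z z' hz hz' hr
    obtain ⟨w, hrw, hwle, -⟩ := exists_min_rep hz
    obtain ⟨w', hrw', hw'le, -⟩ := exists_min_rep hz'
    have hw : w ∈ Z a := (rrel_iff.1 hrw).2.1
    have hw' : w' ∈ Z a := (rrel_iff.1 hrw').2.1
    have hstep : Step a (fun x y => (d x y : ℕ∞) ≤ D) w w' := by
      refine ⟨hw, hw', ?_⟩
      rcases le_max_iff.1 (d_le_max w w') with h2 | h2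
      · exact le_trans (by exact_mod_cast h2) (hwle.trans hmu)
      · exact le_trans (by exact_mod_cast h2) (hw'le.trans hmu)
    exact chain_trans (L z w hrw) (chain_trans (chain_single hstep) (L w' z' (rrel_symm hrw')))

end Proof1

/-- Let `H` be a reduced, commutative, cancellative, atomic monoid satisfying the ascending
chain condition on principal ideals. Then
`c(H) = sup{μ(a) : a ∈ H, A_a(∼_H) ≠ ∅, |R_a| > 1}`. -/
theorem stmt1 {α : Type*} [CancelCommMonoid α]
    (hred : Reduced α) (hatomic : Atomic α) (haccp : ACCP α) :
    catH α = sSup {r : ℕ∞ | ∃ a : α, (AtomsAt (relMon α) a).Nonempty ∧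
      (∃ z ∈ Z a, ∃ z' ∈ Z a, ¬ RRel a z z') ∧ r = mu a} := by
  have hD : ∀ b : α, ∀ z z' : Fac α, z ∈ Z b → z' ∈ Z b → ¬ RRel b z z' →
      mu b ≤ sSup {r : ℕ∞ | ∃ a : α, (AtomsAt (relMon α) a).Nonempty ∧
        (∃ z ∈ Z a, ∃ z' ∈ Z a, ¬ RRel a z z') ∧ r = mu a} := by
    intro b z z' hz hz' hnr
    exact le_sSup ⟨b, ⟨(z, z'), isAtom_of_not_rrel hz hz' hnr, hz, hz'⟩,
      ⟨z, hz, z', hz', hnr⟩, rfl⟩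
  apply le_antisymm
  · rw [catH]
    refine iSup_le fun a => ?_
    rw [cat]
    refine sInf_le ?_
    intro z hz z' hz'
    exact main_chain haccp _ hD a z hz z' hz'
  · refine sSup_le ?_
    rintro r ⟨a, hat, ⟨z, hz, z', hz', hnr⟩, rfl⟩
    have h1 : mu a ≤ cat a := by
      rw [mu]
      refine sSup_le ?_
      rintro r' ⟨w, hw, rfl⟩
      rw [cat]
      refine le_sInf ?_
      intro N hN
      have hy : ∃ y ∈ Z a, ¬ RRel a w y := by
        by_cases h2 : RRel a w z
        · exact ⟨z', hz', fun hc => hnr (rrel_trans (rrel_symm h2) hc)⟩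
        · exact ⟨z, hz, h2⟩
      obtain ⟨y, hym, hwy⟩ := hy
      obtain ⟨x, hx1, hx2⟩ := crossing hw hwy (hN w hw y hym)
      have h3 : sInf {n : ℕ | ∃ z', RRel a w z' ∧ Multiset.card z' = n} ≤ Multiset.card x :=
        Nat.sInf_le ⟨x, hx1, rfl⟩
      exact le_trans (by exact_mod_cast h3) hx2
    refine h1.trans ?_
    rw [catH]
    exact le_iSup _ a

end CMR
end

section
/- Let H be a reduced, commutative, cancellative, atomic monoid, let a ∈ H, and let k, l ∈ L(a) be adjacent with k < l. If there exist x ∈ Z_k(a) and y ∈ Z_l(a) connected by a monotone R-chain, then d(Z_k(a), Z_l(a)) < l; in particular μ_adj(a) ≠ l. -/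
namespace CMR

variable {α : Type*} [CancelCommMonoid α]

lemma d_comm' (z z' : Fac α) : d z z' = d z' z := by
  unfold d; exact max_comm _ _

lemma dS_comm' (X Y : Set (Fac α)) : dS X Y = dS Y X := by
  unfold dS
  congr 1
  ext n
  constructor <;> rintro ⟨x, hx, y, hy, h⟩ <;> exact ⟨y, hy, x, hx, by rw [d_comm']; exact h⟩

lemma d_lt' (z z' : Fac α) (k l : ℕ) (hk : Multiset.card z = k) (hl : Multiset.card z' = l)
    (hkl : k < l) (u : {u : α // Irreducible u}) (hu : u ∈ z) (hu' : u ∈ z') :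
    d z z' < l := by
  letI := Classical.decEq {u : α // Irreducible u}
  unfold d
  have h1 : Multiset.card (z - z') ≤ k := by
    calc Multiset.card (z - z') ≤ Multiset.card z :=
          Multiset.card_le_card (Multiset.sub_le_self _ _)
    _ = k := hk
  have hmem : u ∈ z' ∩ z := Multiset.mem_inter.2 ⟨hu', hu⟩
  have h2 : 1 ≤ Multiset.card (z' ∩ z) := Multiset.card_pos_iff_exists_mem.2 ⟨u, hmem⟩
  have h3 : Multiset.card (z' - z) + Multiset.card (z' ∩ z) = l := by
    rw [← Multiset.card_add, Multiset.sub_add_inter, hl]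
  exact max_lt (lt_of_le_of_lt h1 hkl) (by omega)

lemma chain_step' {a : α} {k l : ℕ} (hadj : Adjacent a k l) {x y : Fac α}
    (hxk : Multiset.card x = k) (hyl : Multiset.card y = l)
    (hch : MonRChain a x y) :
    ∃ z ∈ Z a, Multiset.card z = k ∧ ∃ z' ∈ Z a, Multiset.card z' = l ∧ RStep z z' := by
  obtain ⟨_, _, hkl, hbet⟩ := hadj
  obtain ⟨n, c, h0, hlast, hZ, hstep⟩ := hch
  set g : Fin (n + 1) → ℕ := fun i => Multiset.card (c i) with hg
  have hmono : Monotone g := Fin.monotone_iff_le_succ.2 fun i => (hstep i).2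
  have hg0 : g 0 = k := by simp only [hg, h0, hxk]
  have hglast : g (Fin.last n) = l := by simp only [hg, hlast, hyl]
  have hbound : ∀ i, g i = k ∨ g i = l := fun i =>
    hbet (g i) ⟨c i, hZ i, rfl⟩ (hg0 ▸ hmono (Fin.zero_le i)) (hglast ▸ hmono (Fin.le_last i))
  have hne : ∃ i : Fin n, g i.castSucc = k ∧ g i.succ = l := by
    by_contra h
    push_neg at h
    have hconst : ∀ j, g j = g 0 := by
      intro j
      induction j using Fin.induction with
      | zero => rfl
      | succ i ih =>
        rcases hbound i.succ with hs | hs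
        · omega
        · exfalso
          have hc : g i.castSucc = k := by omega
          exact h i hc hs
    have := hconst (Fin.last n)
    omega
  obtain ⟨i, h1, h2⟩ := hne
  exact ⟨c i.castSucc, hZ _, h1, c i.succ, hZ _, h2, (hstep i).1⟩

/-- Let `H` be a reduced, commutative, cancellative, atomic monoid, `a ∈ H`, and let
`k, l ∈ L(a)` be adjacent with `k < l`. If there exist `x ∈ Z_k(a)` and `y ∈ Z_l(a)`
connected by a monotone `R`-chain, then `d(Z_k(a), Z_l(a)) < l`; in particular
`μ_adj(a) ≠ l`. -/
theorem stmt11 {α : Type*} [CancelCommMonoid α]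
    (hred : Reduced α) (hatomic : Atomic α) (a : α) (k l : ℕ)
    (hadj : Adjacent a k l)
    (hchain : ∃ x ∈ Zk a k, ∃ y ∈ Zk a l, MonRChain a x y) :
    dS (Zk a k) (Zk a l) < l ∧ muadj a ≠ (l : ℕ∞) := by
  obtain ⟨x, hx, y, hy, hch⟩ := hchain
  obtain ⟨z, hzZ, hzk, z', hz'Z, hz'l, u, hu, hu'⟩ :=
    chain_step' hadj hx.2 hy.2 hch
  have hkl : k < l := hadj.2.2.1
  have hdlt : dS (Zk a k) (Zk a l) < l := by
    have hd : d z z' < l := d_lt' z z' k l hzk hz'l hkl u hu hu'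
    have hle : dS (Zk a k) (Zk a l) ≤ d z z' :=
      Nat.sInf_le ⟨z, ⟨hzZ, hzk⟩, z', ⟨hz'Z, hz'l⟩, rfl⟩
    exact lt_of_le_of_lt hle hd
  refine ⟨hdlt, fun hmu => ?_⟩
  -- `l` must be attained in the set defining `muadj a`
  have hmem : (l : ℕ∞) ∈ {r : ℕ∞ | ∃ k' ∈ L a,
      (∃ l' : ℕ, Adjacent a l' k' ∧ dS (Zk a k') (Zk a l') = k') ∧ r = (k' : ℕ∞)} := by
    by_contra hnot
    have hub : ∀ r ∈ {r : ℕ∞ | ∃ k' ∈ L a,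
        (∃ l' : ℕ, Adjacent a l' k' ∧ dS (Zk a k') (Zk a l') = k') ∧ r = (k' : ℕ∞)},
        r ≤ ((l - 1 : ℕ) : ℕ∞) := by
      rintro r ⟨k', hk', hw, rfl⟩
      have hle : (k' : ℕ∞) ≤ (l : ℕ∞) := by
        rw [← hmu]
        exact le_sSup ⟨k', hk', hw, rfl⟩
      have hle' : k' ≤ l := by exact_mod_cast hle
      have hne : k' ≠ l := by
        intro h
        exact hnot ⟨k', hk', hw, by rw [h]⟩
      exact_mod_cast Nat.le_sub_one_of_lt (lt_of_le_of_ne hle' hne)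
    have hsup : muadj a ≤ ((l - 1 : ℕ) : ℕ∞) := sSup_le hub
    rw [hmu] at hsup
    have : l ≤ l - 1 := by exact_mod_cast hsup
    omega
  obtain ⟨k', hk', ⟨l', hadj', hdS⟩, hcast⟩ := hmem
  have hkl' : k' = l := by exact_mod_cast hcast.symm
  subst hkl'
  have hl'k : l' = k := by
    rcases le_or_gt l' k with h | h
    · have := hadj'.2.2.2 k hadj.1 h (le_of_lt hkl)
      rcases this with h' | h'
      · omega
      · omega
    · have := hadj.2.2.2 l' hadj'.1 (le_of_lt h) (le_of_lt hadj'.2.2.1)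
      have hlt := hadj'.2.2.1
      omega
  subst hl'k
  rw [dS_comm'] at hdS
  omega

end CMR
end
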